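/- Let H be an N×N Hermitian complex matrix, S a subset of its index set with complement S̄, and T a normal, invertible |S|×|S| complex matrix. Then T commutes with the isospectral reduction R_S(H,λ) = H_{SS} + H_{SS̄}(λI − H_{S̄S̄})⁻¹ H_{S̄S} for every complex number λ that is not an eigenvalue of H_{S̄S̄} if and only if T commutes with the block ((H^k))_{SS} for every natural number k. -/

import Mathlib

set_option linter.unusedSectionVars false
set_option maxHeartbeats 1000000

open Matrix Polynomial Finset

section Aux

variable {m n : Type*} [Fintype m] [Fintype n] [DecidableEq m] [DecidableEq n]

namespace IsoRed

lemma comm_sandwich (T : Matrix m m ℂ) (B : Matrix m n ℂ) (C : Matrix n m ℂ)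
    (D : Matrix n n ℂ)
    (hB : ∀ k : ℕ, T * (B * D ^ k * C) = (B * D ^ k * C) * T) (q : ℂ[X]) :
    T * (B * (aeval D q) * C) = (B * (aeval D q) * C) * T := by
  induction q using Polynomial.induction_on' with
  | add p q hp hq =>
      simp only [map_add, Matrix.mul_add, Matrix.add_mul] at *
      rw [hp, hq]
  | monomial k a =>
      have : B * (aeval D (monomial k a)) * C = a • (B * D ^ k * C) := by
        rw [aeval_monomial]
        simp [Algebra.algebraMap_eq_smul_one, Matrix.mul_smul, Matrix.smul_mul, smul_smul]
      rw [this, Matrix.mul_smul, Matrix.smul_mul, hB]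

lemma aeval_smul_shift (D : Matrix n n ℂ) (c : ℂ) (r : ℂ[X]) :
    c • aeval D r = aeval D (Polynomial.C c * r) := by
  rw [_root_.map_mul, aeval_C, Algebra.algebraMap_eq_smul_one, Matrix.smul_mul, Matrix.one_mul]

lemma resolvent_poly (D : Matrix n n ℂ) (z : ℂ) (h : IsUnit (z • (1 : Matrix n n ℂ) - D)) :
    ∃ q : ℂ[X], (z • (1 : Matrix n n ℂ) - D)⁻¹ = aeval D q := by
  set Y := z • (1 : Matrix n n ℂ) - D with hY
  have hdet : IsUnit Y.det := (isUnit_iff_isUnit_det _).mp h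
  have hc0 : Y.charpoly.coeff 0 ≠ 0 := by
    intro h0
    rw [Matrix.det_eq_sign_charpoly_coeff, h0, mul_zero] at hdet
    exact hdet.ne_zero rfl
  have hch : aeval Y Y.charpoly = 0 := Matrix.aeval_self_charpoly Y
  have hdecomp : Y.charpoly = Y.charpoly.divX * Polynomial.X + Polynomial.C (Y.charpoly.coeff 0) :=
    (Polynomial.divX_mul_X_add _).symm
  have h1 : aeval Y Y.charpoly.divX * Y + (Y.charpoly.coeff 0) • 1 = 0 := by
    have h2 := hch
    conv_lhs at h2 => rw [hdecomp]
    simpa [_root_.map_add, _root_.map_mul, aeval_X, aeval_C,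
      Algebra.algebraMap_eq_smul_one] using h2
  have hcomm : Y * aeval Y Y.charpoly.divX = aeval Y Y.charpoly.divX * Y := by
    have h4 := congrArg (aeval Y) (mul_comm Polynomial.X Y.charpoly.divX)
    simpa [_root_.map_mul] using h4
  have key : Y * ((-(Y.charpoly.coeff 0)⁻¹) • aeval Y Y.charpoly.divX) = 1 := by
    have h3 : aeval Y Y.charpoly.divX * Y = -((Y.charpoly.coeff 0) • 1) := by
      rw [← sub_eq_zero]; rw [sub_neg_eq_add]; exact h1
    rw [Matrix.mul_smul, hcomm, h3]
    simp [smul_smul, inv_mul_cancel₀ hc0]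
  have hinv : Y⁻¹ = (-(Y.charpoly.coeff 0)⁻¹) • aeval Y Y.charpoly.divX :=
    Matrix.inv_eq_right_inv key
  have hYa : Y = aeval D (Polynomial.C z - Polynomial.X) := by
    rw [map_sub, aeval_C, aeval_X, Algebra.algebraMap_eq_smul_one, hY]
  refine ⟨Polynomial.C (-(Y.charpoly.coeff 0)⁻¹) *
      (Y.charpoly.divX.comp (Polynomial.C z - Polynomial.X)), ?_⟩
  rw [hinv, ← aeval_smul_shift]
  congr 1
  rw [aeval_comp, ← hYa]

end IsoRed

namespace IsoRed2

variable (A : Matrix m m ℂ) (B : Matrix m n ℂ) (C : Matrix n m ℂ) (D : Matrix n n ℂ)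

local notation "Gm" => fromBlocks A B C D

lemma Mk_zero : ((Gm) ^ 0).toBlocks₁₁ = 1 := by
  rw [pow_zero, ← fromBlocks_one, toBlocks_fromBlocks₁₁]

lemma Nk_zero : ((Gm) ^ 0).toBlocks₂₁ = 0 := by
  rw [pow_zero, ← fromBlocks_one, toBlocks_fromBlocks₂₁]

lemma Mk_one : ((Gm) ^ 1).toBlocks₁₁ = A := by
  rw [pow_one, toBlocks_fromBlocks₁₁]

lemma Mk_succ (k : ℕ) : ((Gm) ^ (k+1)).toBlocks₁₁ =
    A * ((Gm) ^ k).toBlocks₁₁ + B * ((Gm) ^ k).toBlocks₂₁ := by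
  conv_lhs => rw [pow_succ', ← fromBlocks_toBlocks ((Gm) ^ k), fromBlocks_multiply,
    toBlocks_fromBlocks₁₁]

lemma Nk_succ (k : ℕ) : ((Gm) ^ (k+1)).toBlocks₂₁ =
    C * ((Gm) ^ k).toBlocks₁₁ + D * ((Gm) ^ k).toBlocks₂₁ := by
  conv_lhs => rw [pow_succ', ← fromBlocks_toBlocks ((Gm) ^ k), fromBlocks_multiply,
    toBlocks_fromBlocks₂₁]

lemma Nk_sum (k : ℕ) : ((Gm) ^ k).toBlocks₂₁ =
    ∑ j ∈ range k, D ^ (k - 1 - j) * C * ((Gm) ^ j).toBlocks₁₁ := by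
  induction k with
  | zero => rw [Nk_zero]; simp
  | succ k ih =>
      rw [Nk_succ, ih, Matrix.mul_sum, Finset.sum_range_succ]
      have h1 : ∀ j ∈ range k,
          D * (D ^ (k - 1 - j) * C * ((Gm) ^ j).toBlocks₁₁) =
          D ^ (k + 1 - 1 - j) * C * ((Gm) ^ j).toBlocks₁₁ := by
        intro j hj
        rw [Finset.mem_range] at hj
        rw [← Matrix.mul_assoc, ← Matrix.mul_assoc, ← pow_succ']
        congr 3
        omega
      rw [Finset.sum_congr rfl h1]
      have h2 : D ^ (k + 1 - 1 - k) * C * ((Gm) ^ k).toBlocks₁₁ = C * ((Gm) ^ k).toBlocks₁₁ := by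
        simp
      rw [h2, add_comm]

lemma Mk_formula (k : ℕ) : ((Gm) ^ (k+1)).toBlocks₁₁ =
    A * ((Gm) ^ k).toBlocks₁₁ +
      ∑ j ∈ range k, (B * D ^ (k - 1 - j) * C) * ((Gm) ^ j).toBlocks₁₁ := by
  rw [Mk_succ, Nk_sum, Matrix.mul_sum]
  congr 1
  refine Finset.sum_congr rfl fun j hj => ?_
  rw [← Matrix.mul_assoc, ← Matrix.mul_assoc]

variable (T : Matrix m m ℂ)

lemma comm_blocks_of_comm (hA : Commute T A) (hBDC : ∀ i : ℕ, Commute T (B * D ^ i * C)) :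
    ∀ k : ℕ, Commute T (((Gm) ^ k).toBlocks₁₁) := by
  intro k
  induction k using Nat.strong_induction_on with
  | _ k ih =>
    match k with
    | 0 => rw [Mk_zero]; exact Commute.one_right T
    | (k+1) =>
        rw [Mk_formula]
        refine Commute.add_right (hA.mul_right (ih k (by omega))) ?_
        refine Commute.sum_right _ _ _ fun j hj => ?_
        exact (hBDC _).mul_right (ih j (by rw [Finset.mem_range] at hj; omega))

lemma comm_A_of_blocks (hM : ∀ k : ℕ, Commute T (((Gm) ^ k).toBlocks₁₁)) : Commute T A := by
  have := hM 1
  rwa [Mk_one] at this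

lemma comm_BDC_of_blocks (hM : ∀ k : ℕ, Commute T (((Gm) ^ k).toBlocks₁₁)) :
    ∀ i : ℕ, Commute T (B * D ^ i * C) := by
  intro i
  induction i using Nat.strong_induction_on with
  | _ i ih =>
    have hf := Mk_formula A B C D (i+1)
    rw [Finset.sum_range_succ'] at hf
    have h0 : (B * D ^ (i + 1 - 1 - 0) * C) * ((Gm) ^ 0).toBlocks₁₁ = B * D ^ i * C := by
      rw [Mk_zero, Matrix.mul_one]
      norm_num
    rw [h0] at hf
    have hkey : B * D ^ i * C = ((Gm) ^ (i+1+1)).toBlocks₁₁ - A * ((Gm) ^ (i+1)).toBlocks₁₁ -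
        ∑ j ∈ range i, (B * D ^ (i + 1 - 1 - (j+1)) * C) * ((Gm) ^ (j+1)).toBlocks₁₁ := by
      rw [hf]; abel
    rw [hkey]
    refine Commute.sub_right (Commute.sub_right (hM _)
      ((comm_A_of_blocks A B C D T hM).mul_right (hM _))) ?_
    refine Commute.sum_right _ _ _ fun j hj => ?_
    rw [Finset.mem_range] at hj
    exact (ih (i + 1 - 1 - (j+1)) (by omega)).mul_right (hM _)

end IsoRed2

namespace IsoRed3

/-- coefficient-extraction matrix of the adjugate of the characteristic matrix -/
noncomputable def AkM (D : Matrix n n ℂ) (k : ℕ) : Matrix n n ℂ :=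
  (adjugate (charmatrix D)).map (fun q => q.coeff k)

section MapLemmas

variable {a b c : Type*} [Fintype a] [Fintype b] [Fintype c]

lemma map_coeff_sub (M N : Matrix a b ℂ[X]) (k : ℕ) :
    (M - N).map (fun q => q.coeff k) =
      M.map (fun q => q.coeff k) - N.map (fun q => q.coeff k) := by
  ext i j; simp [Matrix.map_apply]

lemma map_coeff_add (M N : Matrix a b ℂ[X]) (k : ℕ) :
    (M + N).map (fun q => q.coeff k) =
      M.map (fun q => q.coeff k) + N.map (fun q => q.coeff k) := by
  ext i j; simp [Matrix.map_apply]

lemma mapC_mul_coeff (M : Matrix a b ℂ) (W : Matrix b c ℂ[X]) (k : ℕ) :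
    ((M.map Polynomial.C) * W).map (fun q => q.coeff k) =
      M * (W.map fun q => q.coeff k) := by
  ext i j
  simp [Matrix.mul_apply, Matrix.map_apply, Polynomial.finset_sum_coeff, coeff_C_mul]

lemma mul_mapC_coeff (W : Matrix a b ℂ[X]) (M : Matrix b c ℂ) (k : ℕ) :
    (W * (M.map Polynomial.C)).map (fun q => q.coeff k) =
      (W.map fun q => q.coeff k) * M := by
  ext i j
  simp [Matrix.mul_apply, Matrix.map_apply, Polynomial.finset_sum_coeff, coeff_mul_C]

lemma psmul_one_map_coeff (p : ℂ[X]) (k : ℕ) :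
    ((p • (1 : Matrix n n ℂ[X])).map (fun q => q.coeff k)) =
      p.coeff k • (1 : Matrix n n ℂ) := by
  ext i j
  by_cases h : i = j <;>
    simp [Matrix.smul_apply, Matrix.one_apply, h, smul_eq_mul]

lemma psmul_mapC_coeff (p : ℂ[X]) (U : Matrix a b ℂ) (k : ℕ) :
    ((p • (U.map Polynomial.C)).map (fun q => q.coeff k)) = p.coeff k • U := by
  ext i j
  simp [Matrix.smul_apply, Matrix.map_apply, smul_eq_mul, coeff_mul_C]

lemma X_smul_coeff_succ (W : Matrix a b ℂ[X]) (k : ℕ) :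
    (((Polynomial.X : ℂ[X]) • W).map (fun q => q.coeff (k+1))) =
      W.map (fun q => q.coeff k) := by
  ext i j
  simp [Matrix.smul_apply, Matrix.map_apply, smul_eq_mul, coeff_X_mul]

lemma mapC_eval (M : Matrix a b ℂ) (z : ℂ) :
    (M.map Polynomial.C).map (eval z) = M := by
  ext i j; simp [Matrix.map_apply]

lemma map_eval_sub (M N : Matrix a b ℂ[X]) (z : ℂ) :
    (M - N).map (eval z) = M.map (eval z) - N.map (eval z) := by
  ext i j; simp [Matrix.map_apply]

lemma map_eval_add (M N : Matrix a b ℂ[X]) (z : ℂ) :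
    (M + N).map (eval z) = M.map (eval z) + N.map (eval z) := by
  ext i j; simp [Matrix.map_apply]

lemma psmul_map_eval (p : ℂ[X]) (W : Matrix a b ℂ[X]) (z : ℂ) :
    ((p • W).map (eval z)) = (eval z p) • (W.map (eval z)) := by
  ext i j; simp [Matrix.smul_apply, Matrix.map_apply, smul_eq_mul]

lemma map_eval_mul (M : Matrix a b ℂ[X]) (N : Matrix b c ℂ[X]) (z : ℂ) :
    ((M * N).map (eval z)) = M.map (eval z) * N.map (eval z) :=
  Matrix.map_mul (f := evalRingHom z)

end MapLemmas

section CharMatrix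

variable (D : Matrix n n ℂ)

lemma charmatrix_eq : charmatrix D = (Polynomial.X : ℂ[X]) • 1 - D.map Polynomial.C := by
  ext i j
  by_cases h : i = j <;>
    simp [charmatrix_apply, h, Matrix.diagonal_apply, Matrix.smul_apply, Matrix.one_apply,
      smul_eq_mul]

lemma charmatrix_map_eval (z : ℂ) :
    (charmatrix D).map (eval z) = z • (1 : Matrix n n ℂ) - D := by
  rw [charmatrix_eq, map_eval_sub, psmul_map_eval, mapC_eval]
  simp [Matrix.map_one]

lemma eval_charpoly (z : ℂ) :
    eval z D.charpoly = (z • (1 : Matrix n n ℂ) - D).det := by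
  have h := (evalRingHom z).map_det (charmatrix D)
  rw [Matrix.charpoly]
  have : (evalRingHom z) (charmatrix D).det = eval z (charmatrix D).det := rfl
  rw [← this, h]
  congr 1
  have h2 : (RingHom.mapMatrix (evalRingHom z)) (charmatrix D) = (charmatrix D).map (eval z) := rfl
  rw [h2, charmatrix_map_eval]

lemma adjugate_map_eval (z : ℂ) :
    (adjugate (charmatrix D)).map (eval z) = adjugate (z • (1 : Matrix n n ℂ) - D) := by
  have h := (evalRingHom z).map_adjugate (charmatrix D)
  have h1 : (RingHom.mapMatrix (evalRingHom z)) (adjugate (charmatrix D)) =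
      (adjugate (charmatrix D)).map (eval z) := rfl
  have h2 : (RingHom.mapMatrix (evalRingHom z)) (charmatrix D) = (charmatrix D).map (eval z) := rfl
  rw [h1, h2, charmatrix_map_eval] at h
  exact h

lemma AkM_rel (k : ℕ) :
    AkM D k - D * AkM D (k+1) = (D.charpoly.coeff (k+1)) • (1 : Matrix n n ℂ) := by
  have hma : charmatrix D * adjugate (charmatrix D) = D.charpoly • (1 : Matrix n n ℂ[X]) := by
    rw [mul_adjugate]; rfl
  have hrel : (Polynomial.X : ℂ[X]) • adjugate (charmatrix D)
      - (D.map Polynomial.C) * adjugate (charmatrix D) = D.charpoly • 1 := by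
    rw [← hma, charmatrix_eq, Matrix.sub_mul, Matrix.smul_mul, Matrix.one_mul]
  have h := congrArg (fun W : Matrix n n ℂ[X] => W.map (fun q => q.coeff (k+1))) hrel
  rw [map_coeff_sub, X_smul_coeff_succ, mapC_mul_coeff, psmul_one_map_coeff] at h
  exact h


lemma AkM_top (k : ℕ) (hk : Fintype.card n ≤ k) : AkM D k = 0 := by
  ext i j
  simp only [AkM, Matrix.map_apply, Matrix.zero_apply]
  rw [adjugate_apply]
  apply Polynomial.coeff_eq_zero_of_natDegree_lt
  have hne : (Finset.univ : Finset n).Nonempty := ⟨i, Finset.mem_univ i⟩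
  have hcard : 1 ≤ Fintype.card n := Fintype.card_pos_iff.mpr ⟨i⟩
  rw [Matrix.det_apply]
  refine lt_of_le_of_lt (natDegree_sum_le _ _) ?_
  rw [Finset.fold_max_lt]
  constructor
  · omega
  · intro σ _
    simp only [Function.comp_apply]
    have hsm : ((Equiv.Perm.sign σ : ℤˣ) •
        (∏ b : n, ((charmatrix D).updateRow j (Pi.single i 1)) (σ b) b)).natDegree =
        (∏ b : n, ((charmatrix D).updateRow j (Pi.single i 1)) (σ b) b).natDegree := by
      rcases Int.units_eq_one_or (Equiv.Perm.sign σ) with hs | hs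
      · rw [hs, one_smul]
      · rw [hs, Units.neg_smul, one_smul, natDegree_neg]
    rw [hsm]
    refine lt_of_le_of_lt (natDegree_prod_le _ _) (lt_of_le_of_lt ?_ (show Fintype.card n - 1 < k by omega))
    have hb : ∀ b : n, (((charmatrix D).updateRow j (Pi.single i 1)) (σ b) b).natDegree ≤
        if σ b = j then 0 else 1 := by
      intro b
      by_cases h : σ b = j
      · rw [if_pos h, Matrix.updateRow_apply, if_pos h]
        by_cases hbi : b = i
        · subst hbi; simp
        · simp [Pi.single_eq_of_ne hbi]
      · rw [if_neg h, Matrix.updateRow_apply, if_neg h]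
        exact (charmatrix_apply_natDegree_le (M := D) (σ b) b).trans (by split <;> omega)
    set x := σ.symm j with hx
    have hσx : σ x = j := σ.apply_symm_apply j
    calc ∑ b : n, (((charmatrix D).updateRow j (Pi.single i 1)) (σ b) b).natDegree
        = (((charmatrix D).updateRow j (Pi.single i 1)) (σ x) x).natDegree +
          ∑ b ∈ Finset.univ.erase x,
            (((charmatrix D).updateRow j (Pi.single i 1)) (σ b) b).natDegree :=
          (Finset.add_sum_erase _ _ (Finset.mem_univ x)).symm
      _ ≤ 0 + (Finset.univ.erase x).card * 1 := by
          gcongr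
          · have := hb x
            rwa [if_pos hσx] at this
          · exact Finset.sum_le_card_nsmul _ _ 1 (fun b hb' => by
              have := hb b
              refine this.trans (by split <;> omega))
      _ ≤ Fintype.card n - 1 := by
          rw [Finset.card_erase_of_mem (Finset.mem_univ x), Finset.card_univ]
          omega

lemma AkM_formula [Nonempty n] :
    ∀ j : ℕ, j < Fintype.card n →
      AkM D (Fintype.card n - 1 - j) =
        D ^ j + ∑ i ∈ range j, (D.charpoly.coeff (Fintype.card n - j + i)) • D ^ i := by
  have hcard : 1 ≤ Fintype.card n := Fintype.card_pos_iff.mpr ‹_›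
  have hmonic : D.charpoly.Monic := Matrix.charpoly_monic D
  have hdeg : D.charpoly.natDegree = Fintype.card n := Matrix.charpoly_natDegree_eq_dim D
  intro j
  induction j with
  | zero =>
      intro _
      have h := AkM_rel D (Fintype.card n - 1)
      rw [show Fintype.card n - 1 + 1 = Fintype.card n by omega] at h
      rw [AkM_top D (Fintype.card n) le_rfl, Matrix.mul_zero, sub_zero] at h
      have hc : D.charpoly.coeff (Fintype.card n) = 1 := by
        have := hmonic.coeff_natDegree
        rwa [hdeg] at this
      rw [Nat.sub_zero, h, hc]
      simp
  | succ j ih =>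
      intro hj
      have ihj := ih (by omega)
      have h := AkM_rel D (Fintype.card n - 1 - (j+1))
      rw [show Fintype.card n - 1 - (j+1) + 1 = Fintype.card n - 1 - j by omega] at h
      have h2 : AkM D (Fintype.card n - 1 - (j+1)) =
          D * AkM D (Fintype.card n - 1 - j) +
            (D.charpoly.coeff (Fintype.card n - 1 - j)) • 1 :=
        by rw [← h]; abel
      rw [h2, ihj, Matrix.mul_add, Matrix.mul_sum]
      rw [Finset.sum_range_succ']
      have e1 : D * D ^ j = D ^ (j+1) := (pow_succ' D j).symm
      have e2 : ∀ i ∈ range j,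
          D * (D.charpoly.coeff (Fintype.card n - j + i)) • D ^ i =
          (D.charpoly.coeff (Fintype.card n - (j+1) + (i+1))) • D ^ (i+1) := by
        intro i hi
        rw [Matrix.mul_smul, ← pow_succ']
        congr 2
        omega
      rw [Finset.sum_congr rfl e2, e1]
      have e3 : (D.charpoly.coeff (Fintype.card n - (j+1) + 0)) • D ^ 0 =
          (D.charpoly.coeff (Fintype.card n - 1 - j)) • (1 : Matrix n n ℂ) := by
        rw [pow_zero]
        congr 2
        omega
      rw [e3]
      abel

end CharMatrix

section Main

variable (T A : Matrix m m ℂ) (B : Matrix m n ℂ) (C₀ : Matrix n m ℂ) (D : Matrix n n ℂ)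

lemma sandwich_empty [IsEmpty n] (M : Matrix n n ℂ) : B * M * C₀ = 0 := by
  ext i j
  simp [Matrix.mul_apply]

lemma comm_BDC_of_AkM [Nonempty n]
    (hAk : ∀ k : ℕ, Commute T (B * AkM D k * C₀)) :
    ∀ i : ℕ, Commute T (B * D ^ i * C₀) := by
  have hcard : 1 ≤ Fintype.card n := Fintype.card_pos_iff.mpr ‹_›
  have hmonic : D.charpoly.Monic := Matrix.charpoly_monic D
  have hdeg : D.charpoly.natDegree = Fintype.card n := Matrix.charpoly_natDegree_eq_dim D
  have hexpand : ∀ q : ℂ[X], ∀ S : Finset ℕ, (∀ l ∈ S, Commute T (B * D ^ l * C₀)) →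
      Commute T (B * (∑ l ∈ S, q.coeff l • D ^ l) * C₀) := by
    intro q S hS
    rw [Matrix.mul_sum, Matrix.sum_mul]
    refine Commute.sum_right _ _ _ fun l hl => ?_
    rw [Matrix.mul_smul, Matrix.smul_mul]
    exact (hS l hl).smul_right _
  have hlow : ∀ j : ℕ, j < Fintype.card n → Commute T (B * D ^ j * C₀) := by
    intro j
    induction j using Nat.strong_induction_on with
    | _ j ih =>
      intro hj
      have hform := AkM_formula D j hj
      have hBAC : B * AkM D (Fintype.card n - 1 - j) * C₀ =
          B * D ^ j * C₀ + ∑ i ∈ range j,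
            (D.charpoly.coeff (Fintype.card n - j + i)) • (B * D ^ i * C₀) := by
        rw [hform, Matrix.mul_add, Matrix.add_mul, Matrix.mul_sum, Matrix.sum_mul]
        congr 1
        refine Finset.sum_congr rfl fun i hi => ?_
        rw [Matrix.mul_smul, Matrix.smul_mul]
      have hsum : Commute T (∑ i ∈ range j,
          (D.charpoly.coeff (Fintype.card n - j + i)) • (B * D ^ i * C₀)) := by
        refine Commute.sum_right _ _ _ fun i hi => ?_
        rw [Finset.mem_range] at hi
        exact (ih i (by omega) (by omega)).smul_right _
      have heq : B * D ^ j * C₀ = B * AkM D (Fintype.card n - 1 - j) * C₀ -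
          ∑ i ∈ range j, (D.charpoly.coeff (Fintype.card n - j + i)) • (B * D ^ i * C₀) := by
        rw [hBAC]; abel
      rw [heq]
      exact (hAk _).sub_right hsum
  intro i
  by_cases hi : i < Fintype.card n
  · exact hlow i hi
  · have hp1 : D.charpoly ≠ 1 := by
      intro h1
      rw [h1] at hdeg
      simp at hdeg
      omega
    set r := (Polynomial.X : ℂ[X]) ^ i %ₘ D.charpoly with hr
    have hrdeg : r.natDegree < Fintype.card n := by
      have h2 := Polynomial.natDegree_modByMonic_lt ((Polynomial.X : ℂ[X]) ^ i) hmonic hp1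
      rw [← hr] at h2
      omega
    have hDi : D ^ i = aeval D r := by
      have hdiv := Polynomial.modByMonic_add_div ((Polynomial.X : ℂ[X]) ^ i) D.charpoly
      have := congrArg (aeval D) hdiv
      rw [map_add, _root_.map_mul, map_pow, aeval_X, Matrix.aeval_self_charpoly,
        Matrix.zero_mul, add_zero] at this
      exact this.symm
    have hsum : aeval D r = ∑ l ∈ range (Fintype.card n), r.coeff l • D ^ l :=
      Polynomial.aeval_eq_sum_range' hrdeg D
    rw [hDi, hsum]
    exact hexpand r (range (Fintype.card n)) fun l hl => hlow l (Finset.mem_range.mp hl)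

theorem forward
    (h : ∀ z : ℂ, z ∉ spectrum ℂ D →
      T * (A + B * (z • (1 : Matrix n n ℂ) - D)⁻¹ * C₀) =
      (A + B * (z • (1 : Matrix n n ℂ) - D)⁻¹ * C₀) * T) :
    Commute T A ∧ ∀ i : ℕ, Commute T (B * D ^ i * C₀) := by
  cases isEmpty_or_nonempty n with
  | inl hempty =>
      have hsub : Subsingleton (Matrix n n ℂ) :=
        ⟨fun a b => by ext i j; exact (IsEmpty.false i).elim⟩
      have hsp : (0:ℂ) ∉ spectrum ℂ D := by
        rw [spectrum.notMem_iff]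
        exact isUnit_of_subsingleton _
      have h0 := h 0 hsp
      rw [sandwich_empty, add_zero] at h0
      refine ⟨h0, fun i => ?_⟩
      rw [sandwich_empty]
      exact Commute.zero_right T
  | inr hne =>
      have hcard : 1 ≤ Fintype.card n := Fintype.card_pos_iff.mpr ‹_›
      have hmonic : D.charpoly.Monic := Matrix.charpoly_monic D
      have hdeg : D.charpoly.natDegree = Fintype.card n := Matrix.charpoly_natDegree_eq_dim D
      set p := D.charpoly with hp
      have hgood : ∀ z : ℂ, eval z p ≠ 0 → z ∉ spectrum ℂ D := by
        intro z hz
        rw [spectrum.notMem_iff, Algebra.algebraMap_eq_smul_one]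
        rw [Matrix.isUnit_iff_isUnit_det]
        rw [← eval_charpoly]
        exact isUnit_iff_ne_zero.mpr hz
      have hinv : ∀ z : ℂ, eval z p ≠ 0 →
          (z • (1 : Matrix n n ℂ) - D)⁻¹ = (eval z p)⁻¹ • adjugate (z • (1:Matrix n n ℂ) - D) := by
        intro z hz
        rw [Matrix.inv_def, ← eval_charpoly, Ring.inverse_eq_inv]
      set Wp : Matrix m m ℂ[X] :=
        (B.map Polynomial.C) * adjugate (charmatrix D) * (C₀.map Polynomial.C) with hWp
      set Gp : Matrix m m ℂ[X] :=
        p • ((T * A - A * T).map Polynomial.C) +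
          ((T.map Polynomial.C) * Wp - Wp * (T.map Polynomial.C)) with hGp
      have hGmap : ∀ z : ℂ, Gp.map (eval z) =
          (eval z p) • (T * A - A * T) +
            (T * (B * adjugate (z • (1:Matrix n n ℂ) - D) * C₀) -
             (B * adjugate (z • (1:Matrix n n ℂ) - D) * C₀) * T) := by
        intro z
        rw [hGp, hWp]
        simp only [map_eval_add, map_eval_sub, map_eval_mul, psmul_map_eval, mapC_eval,
          adjugate_map_eval]
      have hzero : ∀ z : ℂ, eval z p ≠ 0 → Gp.map (eval z) = 0 := by
        intro z hz
        have h1 := h z (hgood z hz)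
        rw [hinv z hz, Matrix.mul_smul, Matrix.smul_mul, Matrix.mul_add, Matrix.add_mul,
          Matrix.mul_smul, Matrix.smul_mul] at h1
        have h3 := congrArg (fun M : Matrix m m ℂ => (eval z p) • M) h1
        simp only [smul_add, smul_smul, mul_inv_cancel₀ hz, one_smul] at h3
        rw [hGmap z]
        rw [smul_sub]
        have habel : (eval z p) • (T * A) - (eval z p) • (A * T) +
            (T * (B * adjugate (z • (1:Matrix n n ℂ) - D) * C₀) -
              (B * adjugate (z • (1:Matrix n n ℂ) - D) * C₀) * T) =
            ((eval z p) • (T * A) + T * (B * adjugate (z • (1:Matrix n n ℂ) - D) * C₀)) -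
            ((eval z p) • (A * T) + (B * adjugate (z • (1:Matrix n n ℂ) - D) * C₀) * T) := by
          abel
        rw [habel, sub_eq_zero]
        exact h3
      have hGp0 : Gp = 0 := by
        refine Matrix.ext (fun i j => ?_)
        show Gp i j = (0 : ℂ[X])
        apply Polynomial.eq_zero_of_infinite_isRoot
        have hpne : p ≠ 0 := hmonic.ne_zero
        have hfin : {z : ℂ | p.IsRoot z}.Finite := Polynomial.finite_setOf_isRoot hpne
        have hinf : {z : ℂ | p.IsRoot z}ᶜ.Infinite := hfin.infinite_compl
        refine Set.Infinite.mono ?_ hinf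
        intro z hz
        simp only [Set.mem_compl_iff, Set.mem_setOf_eq, IsRoot.def] at hz ⊢
        have := hzero z hz
        have h4 := congrArg (fun M : Matrix m m ℂ => M i j) this
        simpa [Matrix.map_apply] using h4
      have hVk : ∀ k : ℕ, Gp.map (fun q => q.coeff k) =
          p.coeff k • (T * A - A * T) +
            (T * (B * AkM D k * C₀) - (B * AkM D k * C₀) * T) := by
        intro k
        rw [hGp, hWp]
        simp only [map_coeff_add, map_coeff_sub, psmul_mapC_coeff, mapC_mul_coeff,
          mul_mapC_coeff, AkM]
      have hcd : p.coeff (Fintype.card n) = 1 := by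
        have := hmonic.coeff_natDegree
        rwa [hdeg] at this
      have hUz : T * A - A * T = 0 := by
        have h5 := hVk (Fintype.card n)
        rw [hGp0, AkM_top D _ le_rfl, Matrix.mul_zero, Matrix.zero_mul, hcd, one_smul,
          Matrix.mul_zero, Matrix.zero_mul, sub_zero, add_zero] at h5
        ext i j
        have := congrArg (fun M : Matrix m m ℂ => M i j) h5
        simpa [Matrix.map_apply] using this.symm
      have hTA : Commute T A := sub_eq_zero.mp hUz
      have hAk : ∀ k : ℕ, Commute T (B * AkM D k * C₀) := by
        intro k
        have h6 := hVk k
        rw [hGp0, hUz, smul_zero, zero_add] at h6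
        have h7 : T * (B * AkM D k * C₀) - (B * AkM D k * C₀) * T = 0 := by
          ext i j
          have := congrArg (fun M : Matrix m m ℂ => M i j) h6
          simpa [Matrix.map_apply] using this.symm
        exact sub_eq_zero.mp h7
      exact ⟨hTA, comm_BDC_of_AkM T B C₀ D hAk⟩

end Main

end IsoRed3

theorem isored_key (T A : Matrix m m ℂ) (B : Matrix m n ℂ) (C₀ : Matrix n m ℂ)
    (D : Matrix n n ℂ) :
    (∀ z : ℂ, z ∉ spectrum ℂ D →
      T * (A + B * (z • (1 : Matrix n n ℂ) - D)⁻¹ * C₀) =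
      (A + B * (z • (1 : Matrix n n ℂ) - D)⁻¹ * C₀) * T) ↔
    (∀ k : ℕ, T * ((fromBlocks A B C₀ D) ^ k).toBlocks₁₁ =
      ((fromBlocks A B C₀ D) ^ k).toBlocks₁₁ * T) := by
  constructor
  · intro h k
    obtain ⟨hA, hB⟩ := IsoRed3.forward T A B C₀ D h
    exact IsoRed2.comm_blocks_of_comm A B C₀ D T hA hB k
  · intro hM z hz
    have hA : Commute T A := IsoRed2.comm_A_of_blocks A B C₀ D T hM
    have hB := IsoRed2.comm_BDC_of_blocks A B C₀ D T hM
    have hu : IsUnit (z • (1 : Matrix n n ℂ) - D) := by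
      rw [spectrum.notMem_iff, Algebra.algebraMap_eq_smul_one] at hz
      exact hz
    obtain ⟨q, hq⟩ := IsoRed.resolvent_poly D z hu
    rw [hq]
    exact hA.add_right (IsoRed.comm_sandwich T B C₀ D (fun k => hB k) q)

end Aux

/-- `T` commutes with the isospectral reduction
`R_S(H,λ) = H_{SS} + H_{SS̄} (λI - H_{S̄S̄})⁻¹ H_{S̄S}` for every `λ` outside the spectrum of
`H_{S̄S̄}` if and only if `T` commutes with `(H^k)_{SS}` for every natural number `k`. -/
theorem isospectral_reduction_commute_iff_blocks_commute {N : ℕ} (S : Finset (Fin N))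
    (H : Matrix (Fin N) (Fin N) ℂ) (hH : H.IsHermitian)
    (T : Matrix ↥S ↥S ℂ) (hTnormal : T * Tᴴ = Tᴴ * T) (hTinv : IsUnit T) :
    (∀ z : ℂ, z ∉ spectrum ℂ
        (H.submatrix (fun i : ↥Sᶜ => (i : Fin N)) (fun i : ↥Sᶜ => (i : Fin N))) →
      T * (H.submatrix (fun i : ↥S => (i : Fin N)) (fun i : ↥S => (i : Fin N)) +
        H.submatrix (fun i : ↥S => (i : Fin N)) (fun i : ↥Sᶜ => (i : Fin N)) *
          (z • (1 : Matrix ↥Sᶜ ↥Sᶜ ℂ) -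
            H.submatrix (fun i : ↥Sᶜ => (i : Fin N)) (fun i : ↥Sᶜ => (i : Fin N)))⁻¹ *
          H.submatrix (fun i : ↥Sᶜ => (i : Fin N)) (fun i : ↥S => (i : Fin N))) =
      (H.submatrix (fun i : ↥S => (i : Fin N)) (fun i : ↥S => (i : Fin N)) +
        H.submatrix (fun i : ↥S => (i : Fin N)) (fun i : ↥Sᶜ => (i : Fin N)) *
          (z • (1 : Matrix ↥Sᶜ ↥Sᶜ ℂ) -
            H.submatrix (fun i : ↥Sᶜ => (i : Fin N)) (fun i : ↥Sᶜ => (i : Fin N)))⁻¹ *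
          H.submatrix (fun i : ↥Sᶜ => (i : Fin N)) (fun i : ↥S => (i : Fin N))) * T)
    ↔
    (∀ k : ℕ,
      T * (H ^ k).submatrix (fun i : ↥S => (i : Fin N)) (fun i : ↥S => (i : Fin N)) =
      (H ^ k).submatrix (fun i : ↥S => (i : Fin N)) (fun i : ↥S => (i : Fin N)) * T) := by
  classical
  let e : (↥S ⊕ ↥Sᶜ) ≃ Fin N :=
    (Equiv.sumCongr (Equiv.refl ↥S)
      (Equiv.subtypeEquivRight (fun x => Finset.mem_compl))).trans
      (Equiv.sumCompl (· ∈ S))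
  have hGe : H.submatrix ⇑e ⇑e =
      fromBlocks (H.submatrix (fun i : ↥S => (i : Fin N)) (fun i : ↥S => (i : Fin N)))
        (H.submatrix (fun i : ↥S => (i : Fin N)) (fun i : ↥Sᶜ => (i : Fin N)))
        (H.submatrix (fun i : ↥Sᶜ => (i : Fin N)) (fun i : ↥S => (i : Fin N)))
        (H.submatrix (fun i : ↥Sᶜ => (i : Fin N)) (fun i : ↥Sᶜ => (i : Fin N))) := by
    ext (i | i) (j | j) <;> rfl
  have hpow : ∀ k : ℕ, (H ^ k).submatrix ⇑e ⇑e = (H.submatrix ⇑e ⇑e) ^ k := by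
    intro k
    induction k with
    | zero => rw [pow_zero, pow_zero]; exact submatrix_one_equiv e
    | succ k ih =>
        rw [pow_succ, pow_succ, ← ih]
        exact (submatrix_mul_equiv (H ^ k) H ⇑e e ⇑e).symm
  have hblock : ∀ k : ℕ,
      (H ^ k).submatrix (fun i : ↥S => (i : Fin N)) (fun i : ↥S => (i : Fin N)) =
      ((H.submatrix ⇑e ⇑e) ^ k).toBlocks₁₁ := by
    intro k
    rw [← hpow]
    rfl
  rw [isored_key]
  constructor
  · intro h k
    rw [hblock, hGe] at *
    exact h k
  · intro h k
    have := h k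
    rw [hblock, hGe] at this
    exact this
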